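/- Let H be a real Hilbert space and let f : H → ℝ be quasiconvex, lower semicontinuous, and bounded below. Then for every x ∈ H and every β > 0 the proximal set Prox_{βf}(x) is nonempty, i.e., the function y ↦ f(y) + (1/(2β))‖y − x‖² attains its minimum over H at some point. -/

import Mathlib

set_option maxHeartbeats 1000000

/-- For a quasiconvex, lower semicontinuous function `f` bounded
below on a real Hilbert space, the proximal set `Prox_{βf}(x)` is nonempty for
every `x` and every `β > 0`. -/
theorem prox_nonempty_of_quasiconvex_lsc_bddBelow
    {H : Type*} [NormedAddCommGroup H] [InnerProductSpace ℝ H] [CompleteSpace H]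
    (f : H → ℝ)
    (hq : ∀ x y : H, ∀ t ∈ Set.Icc (0 : ℝ) 1,
      f ((1 - t) • x + t • y) ≤ max (f x) (f y))
    (hlsc : LowerSemicontinuous f)
    (m : ℝ) (hbdd : ∀ y : H, m ≤ f y)
    (x : H) (β : ℝ) (hβ : 0 < β) :
    ∃ z : H, ∀ y : H,
      f z + (1 / (2 * β)) * ‖z - x‖ ^ 2 ≤ f y + (1 / (2 * β)) * ‖y - x‖ ^ 2 := by
  set c : ℝ := 1 / (2 * β) with hc_def
  have hc : 0 < c := by positivity
  set g : H → ℝ := fun y => f y + c * ‖y - x‖ ^ 2 with hg_def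
  have hgb : ∀ y, m ≤ g y := fun y =>
    le_add_of_le_of_nonneg (hbdd y) (by positivity)
  have hbddg : BddBelow (Set.range g) := ⟨m, by rintro _ ⟨y, rfl⟩; exact hgb y⟩
  set M : ℝ := ⨅ y, g y with hM_def
  have hMle : ∀ y, M ≤ g y := fun y => ciInf_le hbddg y
  -- sublevel sets
  have hLclosed : ∀ t : ℝ, IsClosed {y : H | f y ≤ t} := fun t =>
    hlsc.isClosed_preimage t
  have hLconvex : ∀ t : ℝ, Convex ℝ {y : H | f y ≤ t} := by
    intro t u hu v hv a b ha hb hab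
    have h1 : a = 1 - b := by linarith
    have h2 := hq u v b ⟨hb, by linarith⟩
    have : f ((1 - b) • u + b • v) ≤ t := h2.trans (max_le hu hv)
    simpa [h1] using this
  -- projections onto sublevel sets
  have proj : ∀ t : ℝ, {y : H | f y ≤ t}.Nonempty →
      ∃ p : H, f p ≤ t ∧ ∀ z : H, f z ≤ t → ‖p - x‖ ≤ ‖z - x‖ := by
    intro t hne
    obtain ⟨p, hp, hpeq⟩ := exists_norm_eq_iInf_of_complete_convex hne
      (hLclosed t).isComplete (hLconvex t) x
    refine ⟨p, hp, fun z hz => ?_⟩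
    have hb0 : BddBelow (Set.range fun w : {y : H | f y ≤ t} => ‖x - (w : H)‖) :=
      ⟨0, by rintro _ ⟨w, rfl⟩; exact norm_nonneg _⟩
    have : ‖x - p‖ ≤ ‖x - z‖ := by
      rw [hpeq]; exact ciInf_le hb0 (⟨z, hz⟩ : {y : H | f y ≤ t})
    rwa [norm_sub_rev x p, norm_sub_rev x z] at this
  -- minimizing sequence
  have hseq : ∀ n : ℕ, ∃ y : H, g y < M + 1 / (n + 1) := by
    intro n
    have h1 : M < M + 1 / (n + 1) := by
      have : (0:ℝ) < 1 / (n + 1) := by positivity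
      linarith
    exact exists_lt_of_ciInf_lt h1
  choose y hy using hseq
  set t : ℕ → ℝ := fun n => f (y n) with ht_def
  choose p hp1 hp2 using fun n => proj (t n) ⟨y n, le_refl (t n)⟩
  have key : ∀ n : ℕ, t n + c * ‖p n - x‖ ^ 2 ≤ M + 1 / (n + 1) := by
    intro n
    have h1 : ‖p n - x‖ ≤ ‖y n - x‖ := hp2 n (y n) (le_refl _)
    have h2 : ‖p n - x‖ ^ 2 ≤ ‖y n - x‖ ^ 2 :=
      pow_le_pow_left₀ (norm_nonneg _) h1 2
    have h3 := hy n
    nlinarith [hc]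
  have htub : ∀ n, t n ≤ M + 1 := by
    intro n
    have h1 := hy n
    have h2 : (0:ℝ) ≤ c * ‖y n - x‖ ^ 2 := by positivity
    have h3 : 1 / ((n:ℝ) + 1) ≤ 1 := by
      rw [div_le_one (by positivity)]; simp
    simp only [hg_def] at h1
    linarith
  have htlb : ∀ n, m ≤ t n := fun n => hbdd (y n)
  -- it suffices to find z with g z ≤ M + ε for all ε > 0
  suffices hs : ∃ z : H, ∀ ε : ℝ, 0 < ε → g z ≤ M + ε by
    obtain ⟨z, hz⟩ := hs
    refine ⟨z, fun w => ?_⟩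
    have h1 : g z ≤ M := le_of_forall_pos_le_add fun ε hε => hz ε hε
    exact h1.trans (hMle w)
  -- monotone subsequence of t
  haveI : IsTrans ℝ (· ≤ · : ℝ → ℝ → Prop) := ⟨fun _ _ _ => le_trans⟩
  obtain ⟨σ, hσ⟩ := exists_increasing_or_nonincreasing_subseq (· ≤ · : ℝ → ℝ → Prop) t
  set s : ℕ → ℝ := fun k => t (σ k) with hs_def
  set q : ℕ → H := fun k => p (σ k) with hq_def2
  have hkey : ∀ k : ℕ, s k + c * ‖q k - x‖ ^ 2 ≤ M + 1 / (k + 1) := by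
    intro k
    have h1 := key (σ k)
    have h2 : (k:ℝ) + 1 ≤ (σ k : ℝ) + 1 := by
      have hle : k ≤ σ k := σ.strictMono.le_apply
      exact_mod_cast by exact_mod_cast add_le_add_left (Nat.cast_le.mpr hle) 1
    have h3 : 1 / ((σ k : ℝ) + 1) ≤ 1 / ((k:ℝ) + 1) :=
      one_div_le_one_div_of_le (by positivity) h2
    calc s k + c * ‖q k - x‖ ^ 2 ≤ M + 1 / ((σ k : ℝ) + 1) := h1
      _ ≤ M + 1 / ((k:ℝ) + 1) := by linarith
  have hfq : ∀ k, f (q k) ≤ s k := fun k => hp1 (σ k)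
  rcases hσ with hmono | hanti
  · -- nondecreasing case
    have hsmono : Monotone s := by
      intro k l hkl
      rcases lt_or_eq_of_le hkl with h | h
      · exact hmono k l h
      · rw [h]
    have hbdds : BddAbove (Set.range s) :=
      ⟨M + 1, by rintro _ ⟨k, rfl⟩; exact htub (σ k)⟩
    set T : ℝ := ⨆ k, s k with hT_def
    have hsT : ∀ k, s k ≤ T := fun k => le_ciSup hbdds k
    obtain ⟨P, hP1, hP2⟩ := proj T ⟨q 0, (hfq 0).trans (hsT 0)⟩
    refine ⟨P, fun ε hε => ?_⟩
    obtain ⟨k₁, hk₁⟩ : ∃ k, T - ε / 2 < s k := by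
      apply exists_lt_of_lt_ciSup
      rw [← hT_def]; linarith
    obtain ⟨N, hN⟩ := exists_nat_one_div_lt (show (0:ℝ) < ε / 2 by linarith)
    set k := max k₁ N with hk_def
    have hsk : T - ε / 2 < s k := lt_of_lt_of_le hk₁ (hsmono (le_max_left _ _))
    have hNk : 1 / ((k:ℝ) + 1) < ε / 2 := by
      have h2 : ((N:ℝ) + 1) ≤ ((k:ℝ) + 1) := by
        have := le_max_right k₁ N
        exact_mod_cast by simp [hk_def]
      have := one_div_le_one_div_of_le (by positivity : (0:ℝ) < (N:ℝ)+1) h2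
      linarith
    have hqk : ‖P - x‖ ≤ ‖q k - x‖ := hP2 (q k) ((hfq k).trans (hsT k))
    have hqk2 : ‖P - x‖ ^ 2 ≤ ‖q k - x‖ ^ 2 := pow_le_pow_left₀ (norm_nonneg _) hqk 2
    have h5 := hkey k
    have : g P = f P + c * ‖P - x‖ ^ 2 := rfl
    rw [this]
    nlinarith [hc]
  · -- nonincreasing case
    have hanti' : ∀ k l : ℕ, k ≤ l → s l ≤ s k := by
      intro k l hkl
      rcases lt_or_eq_of_le hkl with h | h
      · exact le_of_not_ge (hanti k l h)
      · rw [h]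
    have hdmono : ∀ k l : ℕ, k ≤ l → ‖q k - x‖ ≤ ‖q l - x‖ := by
      intro k l hkl
      exact hp2 (σ k) (q l) ((hfq l).trans (hanti' k l hkl))
    set e : ℕ → ℝ := fun k => ‖q k - x‖ ^ 2 with he_def
    have hemono : ∀ k l : ℕ, k ≤ l → e k ≤ e l := fun k l hkl =>
      pow_le_pow_left₀ (norm_nonneg _) (hdmono k l hkl) 2
    have hbdde : BddAbove (Set.range e) := by
      refine ⟨(M + 1 - m) / c, ?_⟩
      rintro _ ⟨k, rfl⟩
      have h1 := hkey k
      have h2 := htlb (σ k)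
      have h3 : 1 / ((k:ℝ) + 1) ≤ 1 := by
        rw [div_le_one (by positivity)]; simp
      rw [le_div_iff₀ hc]
      simp only [he_def]
      have h4 : s k = t (σ k) := rfl
      nlinarith
    set D : ℝ := ⨆ k, e k with hD_def
    have heD : ∀ k, e k ≤ D := fun k => le_ciSup hbdde k
    -- key Cauchy estimate
    have hcest : ∀ k l : ℕ, k ≤ l → ‖q k - q l‖ ^ 2 ≤ 2 * (e l - e k) := by
      intro k l hkl
      have hpar := parallelogram_law_with_norm ℝ (q k - x) (q l - x)
      have hmid : ((1:ℝ)/2) • q k + ((1:ℝ)/2) • q l ∈ {y : H | f y ≤ s k} := by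
        apply hLconvex (s k) (hfq k) ((hfq l).trans (hanti' k l hkl))
          (by norm_num) (by norm_num) (by norm_num)
      have hmid2 : ‖q k - x‖ ≤ ‖(((1:ℝ)/2) • q k + ((1:ℝ)/2) • q l) - x‖ :=
        hp2 (σ k) _ hmid
      have hsum : (q k - x) + (q l - x) = (2:ℝ) • ((((1:ℝ)/2) • q k + ((1:ℝ)/2) • q l) - x) := by
        module
      have hsumnorm : ‖(q k - x) + (q l - x)‖ =
          2 * ‖(((1:ℝ)/2) • q k + ((1:ℝ)/2) • q l) - x‖ := by
        rw [hsum, norm_smul]; simp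
      have hdiff : (q k - x) - (q l - x) = q k - q l := by abel
      rw [hdiff, hsumnorm] at hpar
      have h1 : ‖q k - x‖ * ‖q k - x‖ ≤
          ‖(((1:ℝ)/2) • q k + ((1:ℝ)/2) • q l) - x‖ *
          ‖(((1:ℝ)/2) • q k + ((1:ℝ)/2) • q l) - x‖ :=
        mul_self_le_mul_self (norm_nonneg _) hmid2
      simp only [he_def, pow_two]
      nlinarith [h1, hpar]
    have hcauchy : CauchySeq q := by
      rw [Metric.cauchySeq_iff]
      intro ε hε
      obtain ⟨K, hK⟩ : ∃ k, D - ε ^ 2 / 4 < e k := by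
        apply exists_lt_of_lt_ciSup
        have hp2' : (0:ℝ) < ε ^ 2 := pow_pos hε 2
        rw [← hD_def]; linarith
      refine ⟨K, fun l hl k hk => ?_⟩
      have hbound : ∀ a b : ℕ, K ≤ a → a ≤ b → dist (q a) (q b) < ε := by
        intro a b ha hab
        have h1 := hcest a b hab
        have h2 : e a ≤ e b := hemono a b hab
        have h3 : e K ≤ e a := hemono K a ha
        have h4 : e b ≤ D := heD b
        have h5 : ‖q a - q b‖ ^ 2 < ε ^ 2 := by linarith
        have h6 : ‖q a - q b‖ < ε := lt_of_pow_lt_pow_left₀ 2 (le_of_lt hε) h5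
        rwa [dist_eq_norm]
      rcases le_total l k with h | h
      · exact hbound l k hl h
      · rw [dist_comm]; exact hbound k l hk h
    obtain ⟨P, hPlim⟩ := cauchySeq_tendsto_of_complete hcauchy
    refine ⟨P, fun ε hε => ?_⟩
    -- f P ≤ s k for all k
    have hfP : ∀ k, f P ≤ s k := by
      intro k
      have : P ∈ {y : H | f y ≤ s k} := by
        apply (hLclosed (s k)).mem_of_tendsto hPlim
        filter_upwards [Filter.eventually_ge_atTop k] with l hl
        exact (hfq l).trans (hanti' k l hl)
      exact this
    -- ‖P - x‖² ≤ D
    have hnormP : ‖P - x‖ ^ 2 ≤ D := by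
      have h1 : Filter.Tendsto (fun l => ‖q l - x‖ ^ 2) Filter.atTop (nhds (‖P - x‖ ^ 2)) := by
        have h2 : Filter.Tendsto (fun l => q l - x) Filter.atTop (nhds (P - x)) :=
          hPlim.sub_const x
        exact (h2.norm).pow 2
      exact le_of_tendsto h1 (Filter.Eventually.of_forall heD)
    obtain ⟨k₁, hk₁⟩ : ∃ k, D - ε / (2 * c) < e k := by
      apply exists_lt_of_lt_ciSup
      rw [← hD_def]
      have : (0:ℝ) < ε / (2 * c) := by positivity
      linarith
    obtain ⟨N, hN⟩ := exists_nat_one_div_lt (show (0:ℝ) < ε / 2 by linarith)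
    set k := max k₁ N with hk_def
    have hek : D - ε / (2 * c) < e k := lt_of_lt_of_le hk₁ (hemono k₁ k (le_max_left _ _))
    have hNk : 1 / ((k:ℝ) + 1) < ε / 2 := by
      have h2 : ((N:ℝ) + 1) ≤ ((k:ℝ) + 1) := by
        have := le_max_right k₁ N
        exact_mod_cast by simp [hk_def]
      have := one_div_le_one_div_of_le (by positivity : (0:ℝ) < (N:ℝ)+1) h2
      linarith
    have h5 := hkey k
    have h6 := hfP k
    have h7 : c * (D - e k) < c * (ε / (2 * c)) := by
      apply mul_lt_mul_of_pos_left _ hc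
      linarith
    have h8 : c * (ε / (2 * c)) = ε / 2 := by field_simp
    have : g P = f P + c * ‖P - x‖ ^ 2 := rfl
    rw [this]
    have h9 : c * ‖P - x‖ ^ 2 ≤ c * D := mul_le_mul_of_nonneg_left hnormP hc.le
    have h10 : e k = ‖q k - x‖ ^ 2 := rfl
    nlinarith [hc]
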